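/- Let ρ be a finite positive Borel measure on ℝ, a ∈ ℝ, and define F(z) = a + z + ∫ (1 + sz)/(s - z) dρ(s) for z in the upper half-plane. If α ∈ ℝ, then the nontangential limit of (z - α)F(z) as z → α equals -(α² + 1)ρ({α}). -/

import Mathlib

open MeasureTheory Filter Topology Complex

theorem stmt_2 (ρ : Measure ℝ) [IsFiniteMeasure ρ] (a α : ℝ)
    (F : ℂ → ℂ)
    (hF : ∀ z : ℂ, 0 < z.im →
      F z = (a : ℂ) + z + ∫ s : ℝ, (1 + (s : ℂ) * z) / ((s : ℂ) - z) ∂ρ)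
    (M : ℝ) (hM : 0 < M) :
    Tendsto (fun z : ℂ => (z - (α : ℂ)) * F z)
      (𝓝[{z : ℂ | 0 < z.im ∧ |z.re - α| ≤ M * z.im}] (α : ℂ))
      (𝓝 (-(((α : ℂ) ^ 2 + 1)) * ((ρ {α}).toReal : ℂ))) := by
  set S : Set ℂ := {z : ℂ | 0 < z.im ∧ |z.re - α| ≤ M * z.im} with hS
  set l : Filter ℂ := 𝓝[S] (α : ℂ) with hl
  have hle : l ≤ 𝓝 (α : ℂ) := nhdsWithin_le_nhds
  have hmem : ∀ᶠ z in l, z ∈ S := eventually_mem_nhdsWithin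
  have hclose : ∀ᶠ z in l, ‖z - (α : ℂ)‖ ≤ 1 := by
    refine hle ?_
    have h := Metric.closedBall_mem_nhds (α : ℂ) one_pos
    filter_upwards [h] with z hz
    simpa [Metric.mem_closedBall, dist_eq_norm] using hz
  -- nonvanishing of denominator
  have hne : ∀ (s : ℝ) (z : ℂ), 0 < z.im → (s : ℂ) - z ≠ 0 := by
    intro s z hz h
    have : ((s : ℂ) - z).im = 0 := by rw [h]; simp
    simp only [Complex.sub_im, Complex.ofReal_im, zero_sub, neg_eq_zero] at this
    exact hz.ne' this
  -- cone estimate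
  have hcone : ∀ z ∈ S, ∀ s : ℝ, ‖z - (α : ℂ)‖ ≤ Real.sqrt (M ^ 2 + 1) * ‖(s : ℂ) - z‖ := by
    intro z hz s
    obtain ⟨him, hre⟩ := hz
    have h1 : ‖z - (α : ℂ)‖ ^ 2 ≤ (M ^ 2 + 1) * z.im ^ 2 := by
      have : ‖z - (α : ℂ)‖ ^ 2 = (z.re - α) ^ 2 + z.im ^ 2 := by
        rw [Complex.sq_norm, Complex.normSq_apply]
        simp only [Complex.sub_re, Complex.ofReal_re, Complex.sub_im, Complex.ofReal_im,
          sub_zero]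
        ring
      rw [this]
      have h2 : (z.re - α) ^ 2 ≤ (M * z.im) ^ 2 := by
        nlinarith [abs_nonneg (z.re - α), _root_.sq_abs (z.re - α)]
      nlinarith
    have h3 : ‖z - (α : ℂ)‖ ≤ Real.sqrt (M ^ 2 + 1) * z.im := by
      have := Real.sqrt_le_sqrt h1
      rwa [Real.sqrt_sq (norm_nonneg _), Real.sqrt_mul (by positivity),
        Real.sqrt_sq him.le] at this
    have h4 : z.im ≤ ‖(s : ℂ) - z‖ := by
      have := Complex.abs_im_le_norm ((s : ℂ) - z)
      simp only [Complex.sub_im, Complex.ofReal_im, zero_sub, abs_neg] at this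
      calc z.im ≤ |z.im| := le_abs_self _
        _ ≤ ‖(s : ℂ) - z‖ := this
    calc ‖z - (α : ℂ)‖ ≤ Real.sqrt (M ^ 2 + 1) * z.im := h3
      _ ≤ Real.sqrt (M ^ 2 + 1) * ‖(s : ℂ) - z‖ := by
          exact mul_le_mul_of_nonneg_left h4 (Real.sqrt_nonneg _)
  -- the algebraic identity
  have hid : ∀ (s : ℝ) (z : ℂ), 0 < z.im →
      (z - (α : ℂ)) * ((1 + (s : ℂ) * z) / ((s : ℂ) - z))
        = (z - (α : ℂ)) * z + (z - (α : ℂ)) * (1 + z ^ 2) / ((s : ℂ) - z) := by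
    intro s z hz
    field_simp [hne s z hz]
    ring
  -- the bound constant
  set C : ℝ := (|α| + 1) * (|α| + 1) + Real.sqrt (M ^ 2 + 1) * (1 + (|α| + 1) ^ 2) with hC
  -- limit function
  set g : ℝ → ℂ := Set.indicator {α} (fun _ => -(((α : ℂ) ^ 2 + 1))) with hg
  have key : Tendsto (fun z : ℂ => ∫ s : ℝ,
      (z - (α : ℂ)) * ((1 + (s : ℂ) * z) / ((s : ℂ) - z)) ∂ρ) l (𝓝 (∫ s, g s ∂ρ)) := by
    apply tendsto_integral_filter_of_dominated_convergence (fun _ : ℝ => C)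
    · filter_upwards [hmem] with z hz
      apply Continuous.aestronglyMeasurable
      exact continuous_const.mul ((continuous_const.add
        (Complex.continuous_ofReal.mul continuous_const)).div
        (Complex.continuous_ofReal.sub continuous_const) (fun s => hne s z hz.1))
    · filter_upwards [hmem, hclose] with z hz hcl
      refine Eventually.of_forall fun s => ?_
      rw [hid s z hz.1]
      have hzb : ‖z‖ ≤ |α| + 1 := by
        have h := norm_sub_norm_le z ((α : ℂ))
        rw [Complex.norm_real, Real.norm_eq_abs] at h
        linarith
      have h1 : ‖(z - (α : ℂ)) * z‖ ≤ (|α| + 1) * (|α| + 1) := by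
        rw [norm_mul]
        exact mul_le_mul (by linarith [abs_nonneg α]) hzb (norm_nonneg _) (by positivity)
      have h2 : ‖(z - (α : ℂ)) * (1 + z ^ 2) / ((s : ℂ) - z)‖
          ≤ Real.sqrt (M ^ 2 + 1) * (1 + (|α| + 1) ^ 2) := by
        rw [norm_div, norm_mul]
        have hd : (0 : ℝ) < ‖(s : ℂ) - z‖ := by
          rw [norm_pos_iff]; exact hne s z hz.1
        rw [div_le_iff₀ hd]
        have hb1 : ‖(1 : ℂ) + z ^ 2‖ ≤ 1 + (|α| + 1) ^ 2 := by
          calc ‖(1 : ℂ) + z ^ 2‖ ≤ ‖(1 : ℂ)‖ + ‖z ^ 2‖ := norm_add_le _ _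
            _ = 1 + ‖z‖ ^ 2 := by rw [norm_one, norm_pow]
            _ ≤ 1 + (|α| + 1) ^ 2 := by
                have : ‖z‖ ^ 2 ≤ (|α| + 1) ^ 2 :=
                  pow_le_pow_left₀ (norm_nonneg _) hzb 2
                linarith
        calc ‖z - (α : ℂ)‖ * ‖(1 : ℂ) + z ^ 2‖
            ≤ (Real.sqrt (M ^ 2 + 1) * ‖(s : ℂ) - z‖) * (1 + (|α| + 1) ^ 2) := by
              exact mul_le_mul (hcone z hz s) hb1 (norm_nonneg _)
                (by positivity)
          _ = Real.sqrt (M ^ 2 + 1) * (1 + (|α| + 1) ^ 2) * ‖(s : ℂ) - z‖ := by ring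
      calc ‖(z - (α : ℂ)) * z + (z - (α : ℂ)) * (1 + z ^ 2) / ((s : ℂ) - z)‖
          ≤ ‖(z - (α : ℂ)) * z‖ + ‖(z - (α : ℂ)) * (1 + z ^ 2) / ((s : ℂ) - z)‖ :=
            norm_add_le _ _
        _ ≤ C := by rw [hC]; linarith
    · exact integrable_const C
    · refine Eventually.of_forall fun s => ?_
      by_cases hs : s = α
      · have heq : ∀ᶠ z in l, (z - (α : ℂ)) * ((1 + (s : ℂ) * z) / ((s : ℂ) - z))
            = -(1 + (α : ℂ) * z) := by
          filter_upwards [hmem] with z hz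
          rw [hs]
          have h0 : (α : ℂ) - z ≠ 0 := hne α z hz.1
          field_simp
          ring
        have hgs : g s = -(((α : ℂ)) ^ 2 + 1) := by rw [hg, hs]; simp
        rw [hgs]
        refine Tendsto.congr' (heq.mono fun z h => h.symm) ?_
        have t : Tendsto (fun z : ℂ => -(1 + (α : ℂ) * z)) (𝓝 (α : ℂ))
            (𝓝 (-(1 + (α : ℂ) * (α : ℂ)))) :=
          (continuous_const.add (continuous_const.mul continuous_id)).neg.tendsto _
        have := t.mono_left hle
        convert this using 2
        ring
      · have hg0 : g s = 0 := by simp [hg, hs]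
        rw [hg0]
        have t1 : Tendsto (fun z : ℂ => z - (α : ℂ)) l (𝓝 0) := by
          have : Tendsto (fun z : ℂ => z - (α : ℂ)) (𝓝 (α : ℂ)) (𝓝 ((α : ℂ) - (α : ℂ))) :=
            (continuous_id.sub continuous_const).tendsto _
          simpa using this.mono_left hle
        have hsa : (s : ℂ) - (α : ℂ) ≠ 0 := by
          rw [sub_ne_zero]
          exact_mod_cast hs
        have t2 : Tendsto (fun z : ℂ => (1 + (s : ℂ) * z) / ((s : ℂ) - z)) l
            (𝓝 ((1 + (s : ℂ) * (α : ℂ)) / ((s : ℂ) - (α : ℂ)))) := by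
          have : Tendsto (fun z : ℂ => (1 + (s : ℂ) * z) / ((s : ℂ) - z)) (𝓝 (α : ℂ))
              (𝓝 ((1 + (s : ℂ) * (α : ℂ)) / ((s : ℂ) - (α : ℂ)))) :=
            Tendsto.div ((continuous_const.add (continuous_const.mul continuous_id)).tendsto _)
              ((continuous_const.sub continuous_id).tendsto _) hsa
          exact this.mono_left hle
        simpa using t1.mul t2
  have t0 : Tendsto (fun z : ℂ => (z - (α : ℂ)) * ((a : ℂ) + z)) l (𝓝 0) := by
    have : Tendsto (fun z : ℂ => (z - (α : ℂ)) * ((a : ℂ) + z)) (𝓝 (α : ℂ))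
        (𝓝 (((α : ℂ) - (α : ℂ)) * ((a : ℂ) + (α : ℂ)))) :=
      ((continuous_id.sub continuous_const).mul (continuous_const.add continuous_id)).tendsto _
    simpa using this.mono_left hle
  have hsum := t0.add key
  have hint : ∫ s, g s ∂ρ = -(((α : ℂ) ^ 2 + 1)) * ((ρ {α}).toReal : ℂ) := by
    rw [hg, integral_indicator_const _ (measurableSet_singleton α)]
    rw [real_smul, measureReal_def]
    ring
  rw [hint, zero_add] at hsum
  refine Tendsto.congr' ?_ hsum
  filter_upwards [hmem] with z hz
  have hpull : (z - (α : ℂ)) * ∫ s : ℝ, (1 + (s : ℂ) * z) / ((s : ℂ) - z) ∂ρ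
      = ∫ s : ℝ, (z - (α : ℂ)) * ((1 + (s : ℂ) * z) / ((s : ℂ) - z)) ∂ρ :=
    (integral_const_mul _ _).symm
  rw [hF z hz.1, ← hpull]
  ring
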